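/- Let (L, δ) be a lattice diversity and let f be an element of the tight span T_L. Then f is subadditive: for all a, b ∈ L, f(a ∨ b) ≤ f(a) + f(b). -/

import Mathlib

/-- `(L, δ)` is a lattice diversity: `L` is a lattice with least element `⊥`,
`δ : L → ℝ` is nonnegative, vanishes exactly on `⊥` and the atoms, is monotone,
and is subadditive on non-disjoint elements. -/
def IsLatticeDiversity {L : Type*} [Lattice L] [OrderBot L] (δ : L → ℝ) : Prop :=
  (∀ a : L, 0 ≤ δ a) ∧
  (∀ a : L, δ a = 0 ↔ a = ⊥ ∨ IsAtom a) ∧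
  (∀ a b : L, a ≤ b → δ a ≤ δ b) ∧
  (∀ a b : L, a ⊓ b ≠ ⊥ → δ (a ⊔ b) ≤ δ a + δ b)

/-- `f` belongs to `P_L`: `f` is a nonnegative real function on `L` such that
`∑_{b ∈ B} f(b) ≥ δ(⋁ B)` for every finite subset `B` of `L` (with `⋁ ∅ = ⊥`). -/
def MemP {L : Type*} [Lattice L] [OrderBot L] (δ f : L → ℝ) : Prop :=
  (∀ a : L, 0 ≤ f a) ∧ ∀ B : Finset L, δ (B.sup id) ≤ ∑ b ∈ B, f b

/-- `f` belongs to the tight span `T_L`: `f` is a minimal element of `P_L` under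
the pointwise order. -/
def MemT {L : Type*} [Lattice L] [OrderBot L] (δ f : L → ℝ) : Prop :=
  MemP δ f ∧ ∀ g : L → ℝ, MemP δ g → (∀ a : L, g a ≤ f a) → g = f

theorem stmt_15 {L : Type*} [Lattice L] [OrderBot L] (δ : L → ℝ)
    (hδ : IsLatticeDiversity δ) (f : L → ℝ) (hf : MemT δ f) :
    ∀ a b : L, f (a ⊔ b) ≤ f a + f b := by
  classical
  intro a b
  by_contra h
  push_neg at h
  obtain ⟨⟨hf0, hfB⟩, hmin⟩ := hf
  set x := a ⊔ b with hx
  set g : L → ℝ := fun c => if c = x then f a + f b else f c with hg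
  have sum_insert_le : ∀ (c : L) (S : Finset L),
      ∑ d ∈ insert c S, f d ≤ f c + ∑ d ∈ S, f d := by
    intro c S
    by_cases hc : c ∈ S
    · rw [Finset.insert_eq_self.2 hc]
      exact le_add_of_nonneg_left (hf0 c)
    · rw [Finset.sum_insert hc]
  have hgP : MemP δ g := by
    constructor
    · intro c
      by_cases hc : c = x <;>
        simp [hg, hc, add_nonneg (hf0 a) (hf0 b), hf0 c]
    · intro B
      by_cases hxB : x ∈ B
      · obtain ⟨B', hxB', rfl⟩ : ∃ B', x ∉ B' ∧ B = insert x B' :=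
          ⟨B.erase x, Finset.notMem_erase _ _, (Finset.insert_erase hxB).symm⟩
        have hsup : (insert x B').sup id = (insert a (insert b B')).sup id := by
          simp [hx, sup_assoc]
        have hsumg : ∑ c ∈ insert x B', g c = (f a + f b) + ∑ c ∈ B', f c := by
          rw [Finset.sum_insert hxB']
          congr 1
          · simp [hg]
          · refine Finset.sum_congr rfl fun c hc => ?_
            have : c ≠ x := fun hcx => hxB' (hcx ▸ hc)
            simp [hg, this]
        rw [hsup, hsumg]
        calc δ ((insert a (insert b B')).sup id)
            ≤ ∑ c ∈ insert a (insert b B'), f c := hfB _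
          _ ≤ f a + ∑ c ∈ insert b B', f c := sum_insert_le a _
          _ ≤ f a + (f b + ∑ c ∈ B', f c) := by
              exact add_le_add le_rfl (sum_insert_le b B')
          _ = (f a + f b) + ∑ c ∈ B', f c := by ring
      · have : ∑ c ∈ B, g c = ∑ c ∈ B, f c := by
          refine Finset.sum_congr rfl fun c hc => ?_
          have : c ≠ x := fun hcx => hxB (hcx ▸ hc)
          simp [hg, this]
        rw [this]
        exact hfB B
  have hglef : ∀ c : L, g c ≤ f c := by
    intro c
    by_cases hc : c = x
    · simp only [hg, hc, if_pos rfl]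
      exact (le_of_lt (hc ▸ h))
    · simp [hg, hc]
  have := hmin g hgP hglef
  have hgx : g x = f x := by rw [this]
  simp only [hg, if_pos rfl] at hgx
  exact absurd hgx (ne_of_lt h)
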